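/- For n ≥ 5, the number of Dyck paths of size n having exactly one peak on the third diagonal (the line y = x + 3) and no peaks on any diagonal y = x + r with r ≥ 4 equals (n−2)·2^{n−3}. -/

import Mathlib

def northCount {m : ℕ} (p : Fin m → Bool) (k : ℕ) : ℕ :=
  (Finset.univ.filter fun i : Fin m => (i : ℕ) < k ∧ p i = true).card

def IsDyck {n : ℕ} (p : Fin (2 * n) → Bool) : Prop :=
  northCount p (2 * n) = n ∧ ∀ k ≤ 2 * n, k ≤ 2 * northCount p k

def IsPeak {n : ℕ} (p : Fin (2 * n) → Bool) (i : Fin (2 * n)) : Prop :=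
  ∃ j : Fin (2 * n), (j : ℕ) = (i : ℕ) + 1 ∧ p i = true ∧ p j = false

def PeakOnDiag {n : ℕ} (p : Fin (2 * n) → Bool) (i : Fin (2 * n)) (r : ℕ) : Prop :=
  IsPeak p i ∧ 2 * northCount p ((i : ℕ) + 1) = (i : ℕ) + 1 + r
def cnt (l : List Bool) (t : ℕ) : ℕ := (l.take t).count true

lemma cnt_cons_true (l : List Bool) (t : ℕ) :
    cnt (true :: l) (t + 1) = cnt l t + 1 := by
  unfold cnt; rw [List.take_succ_cons, List.count_cons]; simp

lemma cnt_cons_false (l : List Bool) (t : ℕ) :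
    cnt (false :: l) (t + 1) = cnt l t := by
  unfold cnt; rw [List.take_succ_cons, List.count_cons]; simp

lemma cnt_zero (l : List Bool) : cnt l 0 = 0 := rfl

lemma cnt_succ (l : List Bool) (t : ℕ) (h : t < l.length) :
    cnt l (t + 1) = cnt l t + (if l[t] then 1 else 0) := by
  unfold cnt
  rw [List.take_succ, List.getElem?_eq_getElem h]
  cases hb : l[t] <;> simp

def W (e : ℕ) : ℕ → ℕ → Finset (List Bool)
  | 0, h => if h = e then {[]} else ∅
  | (L+1), h =>
      (if h < 2 then (W e L (h+1)).image (List.cons true) else ∅) ∪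
      (if 0 < h then (W e L (h-1)).image (List.cons false) else ∅)

lemma mem_W_succ (e L h : ℕ) (l : List Bool) : l ∈ W e (L+1) h ↔
    (∃ l', l = true :: l' ∧ h < 2 ∧ l' ∈ W e L (h+1)) ∨
    (∃ l', l = false :: l' ∧ 0 < h ∧ l' ∈ W e L (h-1)) := by
  by_cases h2 : h < 2 <;> by_cases h0 : 0 < h <;>
    simp [W, h2, h0, Finset.mem_union, Finset.mem_image, eq_comm] <;> aesop

lemma mem_W {e : ℕ} (he : e ≤ 2) : ∀ {L h : ℕ}, h ≤ 2 → ∀ {l : List Bool},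
    (l ∈ W e L h ↔ l.length = L ∧
      (∀ t ≤ L, t ≤ h + 2 * cnt l t ∧ h + 2 * cnt l t ≤ t + 2) ∧
      h + 2 * cnt l L = L + e) := by
  intro L
  induction L with
  | zero =>
    intro h hh l
    simp only [W]
    split_ifs with h1
    · subst h1
      simp only [Finset.mem_singleton]
      constructor
      · rintro rfl
        refine ⟨rfl, ?_, by simp [cnt_zero]⟩
        intro t ht
        interval_cases t
        rw [cnt_zero]; omega
      · rintro ⟨hl, -, -⟩
        exact List.length_eq_zero_iff.mp hl
    · simp only [Finset.notMem_empty, false_iff]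
      rintro ⟨hl, -, hend⟩
      rw [cnt_zero] at hend
      omega
  | succ L ih =>
    intro h hh l
    rw [mem_W_succ]
    constructor
    · rintro (⟨l', rfl, h2, hm⟩ | ⟨l', rfl, h2, hm⟩)
      · obtain ⟨hlen, hbnd, hend⟩ := (ih (by omega)).mp hm
        refine ⟨by simp [hlen], ?_, ?_⟩
        · intro t ht
          cases t with
          | zero => rw [cnt_zero]; omega
          | succ s =>
            have := hbnd s (by omega)
            rw [cnt_cons_true]
            omega
        · rw [cnt_cons_true]; omega
      · obtain ⟨hlen, hbnd, hend⟩ := (ih (by omega)).mp hm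
        refine ⟨by simp [hlen], ?_, ?_⟩
        · intro t ht
          cases t with
          | zero => rw [cnt_zero]; omega
          | succ s =>
            have := hbnd s (by omega)
            rw [cnt_cons_false]
            omega
        · rw [cnt_cons_false]; omega
    · rintro ⟨hlen, hbnd, hend⟩
      cases l with
      | nil => simp at hlen
      | cons b l' =>
        have hlen' : l'.length = L := by simpa using hlen
        cases b
        · have h1 : 0 < h := by
            have := (hbnd 1 (by omega)).1
            rw [show (1:ℕ) = 0 + 1 from rfl, cnt_cons_false, cnt_zero] at this
            omega
          refine Or.inr ⟨l', rfl, h1, (ih (by omega)).mpr ⟨hlen', ?_, ?_⟩⟩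
          · intro t ht
            have := hbnd (t+1) (by omega)
            rw [cnt_cons_false] at this
            omega
          · have := hend
            rw [cnt_cons_false] at this
            omega
        · have h2 : h < 2 := by
            have := (hbnd 1 (by omega)).2
            rw [show (1:ℕ) = 0 + 1 from rfl, cnt_cons_true, cnt_zero] at this
            omega
          refine Or.inl ⟨l', rfl, h2, (ih (by omega)).mpr ⟨hlen', ?_, ?_⟩⟩
          · intro t ht
            have := hbnd (t+1) (by omega)
            rw [cnt_cons_true] at this
            omega
          · have := hend
            rw [cnt_cons_true] at this
            omega

lemma W_card_succ (e L h : ℕ) : (W e (L+1) h).card =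
    (if h < 2 then (W e L (h+1)).card else 0) + (if 0 < h then (W e L (h-1)).card else 0) := by
  have hdisj : Disjoint (if h < 2 then (W e L (h+1)).image (List.cons true) else ∅)
      (if 0 < h then (W e L (h-1)).image (List.cons false) else ∅) := by
    split_ifs
    · rw [Finset.disjoint_left]
      intro x hx hy
      simp only [Finset.mem_image] at hx hy
      obtain ⟨a, -, rfl⟩ := hx
      obtain ⟨b, -, hb⟩ := hy
      simp at hb
    all_goals simp
  show ((if h < 2 then (W e L (h+1)).image (List.cons true) else ∅) ∪
      (if 0 < h then (W e L (h-1)).image (List.cons false) else ∅)).card = _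
  rw [Finset.card_union_of_disjoint hdisj]
  congr 1 <;> split_ifs <;>
    simp [Finset.card_image_of_injective _ (List.cons_injective)]

lemma W_card_0 (e L : ℕ) : (W e (L+1) 0).card = (W e L 1).card := by
  rw [W_card_succ]; norm_num

lemma W_card_1 (e L : ℕ) : (W e (L+1) 1).card = (W e L 2).card + (W e L 0).card := by
  rw [W_card_succ]; norm_num

lemma W_card_2 (e L : ℕ) : (W e (L+1) 2).card = (W e L 1).card := by
  rw [W_card_succ]; norm_num

lemma W_zero_card (e h : ℕ) : (W e 0 h).card = if h = e then 1 else 0 := by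
  simp only [W]; split_ifs <;> simp

lemma A_card : ∀ k, (W 2 (2*k+2) 0).card = 2^k ∧ (W 2 (2*k+2) 2).card = 2^k ∧
    (W 2 (2*k+3) 1).card = 2^(k+1) := by
  intro k
  induction k with
  | zero =>
    have h1 : (W 2 1 1).card = 1 := by rw [W_card_1, W_zero_card, W_zero_card]; norm_num
    have h2 : (W 2 2 0).card = 1 := by rw [show (2:ℕ) = 1+1 from rfl, W_card_0, h1]
    have h3 : (W 2 2 2).card = 1 := by rw [show (2:ℕ) = 1+1 from rfl, W_card_2, h1]
    refine ⟨by simpa using h2, by simpa using h3, ?_⟩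
    have : (W 2 3 1).card = (W 2 2 2).card + (W 2 2 0).card := W_card_1 2 2
    simp only [this, h2, h3]
    norm_num
  | succ k ih =>
    obtain ⟨ih0, ih2, ih1⟩ := ih
    have e1 : 2*(k+1)+2 = (2*k+3)+1 := by ring
    have e2 : 2*(k+1)+3 = (2*(k+1)+2)+1 := by ring
    have h0 : (W 2 (2*(k+1)+2) 0).card = 2^(k+1) := by rw [e1, W_card_0, ih1]
    have h2' : (W 2 (2*(k+1)+2) 2).card = 2^(k+1) := by rw [e1, W_card_2, ih1]
    refine ⟨h0, h2', ?_⟩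
    rw [e2, W_card_1, h0, h2']
    ring

lemma B_card : ∀ k, (W 0 (2*k+2) 2).card = 2^k ∧ (W 0 (2*k+2) 0).card = 2^k ∧
    (W 0 (2*k+3) 1).card = 2^(k+1) := by
  intro k
  induction k with
  | zero =>
    have h1 : (W 0 1 1).card = 1 := by rw [W_card_1, W_zero_card, W_zero_card]; norm_num
    have h2 : (W 0 2 0).card = 1 := by rw [show (2:ℕ) = 1+1 from rfl, W_card_0, h1]
    have h3 : (W 0 2 2).card = 1 := by rw [show (2:ℕ) = 1+1 from rfl, W_card_2, h1]
    refine ⟨by simpa using h3, by simpa using h2, ?_⟩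
    have : (W 0 3 1).card = (W 0 2 2).card + (W 0 2 0).card := W_card_1 0 2
    simp only [this, h2, h3]
    norm_num
  | succ k ih =>
    obtain ⟨ih2, ih0, ih1⟩ := ih
    have e1 : 2*(k+1)+2 = (2*k+3)+1 := by ring
    have e2 : 2*(k+1)+3 = (2*(k+1)+2)+1 := by ring
    have h0 : (W 0 (2*(k+1)+2) 0).card = 2^(k+1) := by rw [e1, W_card_0, ih1]
    have h2' : (W 0 (2*(k+1)+2) 2).card = 2^(k+1) := by rw [e1, W_card_2, ih1]
    refine ⟨h2', h0, ?_⟩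
    rw [e2, W_card_1, h0, h2']
    ring

lemma cnt_of_le (l : List Bool) {t : ℕ} (h : l.length ≤ t) : cnt l t = l.count true := by
  simp [cnt, List.take_of_length_le h]

lemma cnt_mono (l : List Bool) {s t : ℕ} (h : s ≤ t) : cnt l s ≤ cnt l t := by
  unfold cnt
  have : l.take s = (l.take t).take s := by rw [List.take_take, Nat.min_eq_left h]
  rw [this]
  exact (List.take_sublist _ _).count_le _

lemma cnt_le (l : List Bool) (t : ℕ) : cnt l t ≤ t := by
  unfold cnt
  exact List.count_le_length.trans (by simp)

lemma cnt_append (u v : List Bool) (t : ℕ) :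
    cnt (u ++ v) t = cnt u t + cnt v (t - u.length) := by
  unfold cnt
  rw [List.take_append, List.count_append]

lemma cnt_add (l : List Bool) (m s : ℕ) :
    cnt l (m + s) = cnt l m + cnt (l.drop m) s := by
  unfold cnt
  rw [List.take_add, List.count_append]

lemma cnt_take (l : List Bool) (m t : ℕ) (h : t ≤ m) :
    cnt (l.take m) t = cnt l t := by
  unfold cnt
  rw [List.take_take, Nat.min_eq_left h]

def piece (n k : ℕ) : Finset (List Bool) :=
  ((W 2 (2*k) 0) ×ˢ (W 0 (2*n - (2*k+2)) 2)).image fun uv => uv.1 ++ true :: false :: uv.2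

lemma mem_piece {n k : ℕ} {l : List Bool} : l ∈ piece n k ↔
    ∃ u v, u ∈ W 2 (2*k) 0 ∧ v ∈ W 0 (2*n - (2*k+2)) 2 ∧ l = u ++ true :: false :: v := by
  simp only [piece, Finset.mem_image, Finset.mem_product]
  constructor
  · rintro ⟨⟨u, v⟩, ⟨hu, hv⟩, rfl⟩
    exact ⟨u, v, hu, hv, rfl⟩
  · rintro ⟨u, v, hu, hv, rfl⟩
    exact ⟨(u, v), ⟨hu, hv⟩, rfl⟩

lemma piece_facts {n k : ℕ} {l : List Bool} (hk : k < n) (hl : l ∈ piece n k) :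
    l.length = 2*n ∧ 2*cnt l (2*n) = 2*n ∧ (∀ t ≤ 2*n, t ≤ 2*cnt l t) ∧
    (∀ t ≤ 2*n, t ≠ 2*k+1 → 2*cnt l t ≤ t+2) ∧ 2*cnt l (2*k+1) = 2*k+4 := by
  obtain ⟨u, v, hu, hv, rfl⟩ := mem_piece.mp hl
  set M := 2*n - (2*k+2) with hM
  obtain ⟨hulen, hubnd, huend⟩ := (mem_W (by norm_num) (by norm_num)).mp hu
  obtain ⟨hvlen, hvbnd, hvend⟩ := (mem_W (by norm_num) (by norm_num)).mp hv
  simp only [Nat.zero_add] at huend hubnd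
  have hMn : 2*k + 2 + M = 2*n := by omega
  have hcu : cnt u (2*k) ≤ 2*k := (cnt_le u _).trans (by omega)
  have hk1 : 1 ≤ k := by omega
  have hvM : cnt v M ≤ M := cnt_le v _
  have hM2 : 2 ≤ M := by omega
  have htf0 : cnt (true :: false :: v) 0 = 0 := cnt_zero _
  have htf1 : cnt (true :: false :: v) 1 = 1 := by
    rw [show (1:ℕ) = 0 + 1 from rfl, cnt_cons_true, cnt_zero]
  have htf : ∀ s, cnt (true :: false :: v) (s+2) = 1 + cnt v s := by
    intro s
    rw [show s + 2 = (s+1)+1 from rfl, cnt_cons_true, cnt_cons_false]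
    omega
  have key : ∀ t, cnt (u ++ true :: false :: v) t
      = cnt u t + cnt (true :: false :: v) (t - (2*k)) := by
    intro t; rw [cnt_append, hulen]
  have hucount : ∀ t, 2*k ≤ t → cnt u t = cnt u (2*k) := by
    intro t ht
    rw [cnt_of_le u (by omega), cnt_of_le u (by omega)]
  have hlen : (u ++ true :: false :: v).length = 2*n := by
    simp [hulen, hvlen]; omega
  have hval : ∀ t ≤ 2*n, (t ≤ 2*k → 2*cnt (u ++ true :: false :: v) t = 2*cnt u t)
      ∧ (t = 2*k+1 → 2*cnt (u ++ true :: false :: v) t = 2*k+4)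
      ∧ (∀ s, t = 2*k+2+s → 2*cnt (u ++ true :: false :: v) t = 2*k+4 + 2*cnt v s) := by
    intro t ht
    refine ⟨?_, ?_, ?_⟩
    · intro h
      rw [key, show t - 2*k = 0 by omega, htf0]
      omega
    · rintro rfl
      rw [key, show 2*k+1 - 2*k = 1 by omega, htf1, hucount _ (by omega)]
      omega
    · rintro s rfl
      rw [key, show 2*k+2+s - 2*k = s + 2 by omega, htf s, hucount _ (by omega)]
      omega
  refine ⟨hlen, ?_, ?_, ?_, ?_⟩
  · have := (hval (2*n) le_rfl).2.2 M (by omega)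
    have := hvend
    omega
  · intro t ht
    rcases Nat.lt_or_ge t (2*k+1) with h | h
    · have := (hval t ht).1 (by omega)
      have := (hubnd t (by omega)).1
      omega
    · rcases Nat.eq_or_lt_of_le h with h' | h'
      · have := (hval t ht).2.1 (by omega)
        omega
      · have hs : t = 2*k+2 + (t - (2*k+2)) := by omega
        have := (hval t ht).2.2 (t - (2*k+2)) hs
        have := (hvbnd (t - (2*k+2)) (by omega)).1
        omega
  · intro t ht hne
    rcases Nat.lt_or_ge t (2*k+1) with h | h
    · have := (hval t ht).1 (by omega)
      have := (hubnd t (by omega)).2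
      omega
    · have hs : t = 2*k+2 + (t - (2*k+2)) := by omega
      have := (hval t ht).2.2 (t - (2*k+2)) hs
      have := (hvbnd (t - (2*k+2)) (by omega)).2
      omega
  · exact (hval (2*k+1) (by omega)).2.1 rfl

def Cond (n : ℕ) (l : List Bool) : Prop :=
  l.length = 2*n ∧ 2*cnt l (2*n) = 2*n ∧ (∀ t ≤ 2*n, t ≤ 2*cnt l t) ∧
  (∀ t ≤ 2*n, 2*cnt l t ≤ t+3) ∧ ∃! t, (t ≤ 2*n ∧ 2*cnt l t = t+3)

lemma cond_of_piece {n k : ℕ} {l : List Bool} (hk : k < n) (hl : l ∈ piece n k) :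
    Cond n l := by
  obtain ⟨h1, h2, h3, h4, h5⟩ := piece_facts hk hl
  refine ⟨h1, h2, h3, ?_, ⟨2*k+1, ⟨by omega, by omega⟩, ?_⟩⟩
  · intro t ht
    rcases eq_or_ne t (2*k+1) with rfl | hne
    · omega
    · have := h4 t ht hne
      omega
  · rintro t ⟨ht, heq⟩
    by_contra hne
    have := h4 t ht hne
    omega

lemma uniq_of_piece {n k : ℕ} {l : List Bool} (hk : k < n) (hl : l ∈ piece n k) :
    ∀ t ≤ 2*n, 2*cnt l t = t + 3 → t = 2*k+1 := by
  obtain ⟨h1, h2, h3, h4, h5⟩ := piece_facts hk hl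
  intro t ht heq
  by_contra hne
  have := h4 t ht hne
  omega

lemma exists_piece_of_cond {n : ℕ} {l : List Bool} (hc : Cond n l) :
    ∃ k, k < n ∧ l ∈ piece n k := by
  obtain ⟨hlen, hend, hlow, hup, ⟨t₀, ⟨ht₀n, ht₀⟩, huniq⟩⟩ := hc
  -- t₀ is odd
  have hodd : t₀ % 2 = 1 := by
    have h2 : 2 * cnt l t₀ = t₀ + 3 := ht₀
    omega
  set k := t₀ / 2 with hkdef
  have ht₀k : t₀ = 2*k + 1 := by omega
  have hkn : k < n := by
    rcases Nat.lt_or_ge k n with h | h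
    · exact h
    · exfalso; omega
  -- heights around t₀
  have hD2k1 : 2 * cnt l (2*k+1) = 2*k + 4 := by rw [← ht₀k]; omega
  have hstep : ∀ t (ht : t < l.length),
      cnt l (t+1) = cnt l t + (if l[t] then 1 else 0) := cnt_succ l
  have hg2k : l[2*k]'(by omega) = true := by
    have h1 := hstep (2*k) (by omega)
    have h2 := hup (2*k) (by omega)
    by_contra hgf
    simp only [Bool.not_eq_true] at hgf
    rw [hgf] at h1
    simp at h1
    omega
  have hD2k : 2 * cnt l (2*k) = 2*k + 2 := by
    have h1 := hstep (2*k) (by omega)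
    rw [hg2k] at h1
    simp at h1
    omega
  have hg2k1 : l[2*k+1]'(by omega) = false := by
    have h1 := hstep (2*k+1) (by omega)
    simp only [show 2*k+1+1 = 2*k+2 from by ring] at h1
    have h2 := hup (2*k+2) (by omega)
    have h3 : (2*k+2 : ℕ) ≠ 2*k+1 := by omega
    have h4 : 2*cnt l (2*k+2) ≠ 2*k+5 := by
      intro hcon
      have := huniq (2*k+2) ⟨by omega, by omega⟩
      omega
    by_contra hgt
    simp only [Bool.not_eq_false] at hgt
    rw [hgt] at h1
    simp at h1
    omega
  have hD2k2 : 2 * cnt l (2*k+2) = 2*k + 4 := by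
    have h1 := hstep (2*k+1) (by omega)
    simp only [show 2*k+1+1 = 2*k+2 from by ring] at h1
    rw [hg2k1] at h1
    simp at h1
    omega
  have hM2 : 2*k + 4 ≤ 2*n := by
    have := cnt_mono l (show 2*k+2 ≤ 2*n by omega)
    omega
  set u := l.take (2*k) with hu
  set v := l.drop (2*k+2) with hv
  have hcu : ∀ t ≤ 2*k, cnt u t = cnt l t := fun t h => cnt_take l _ _ h
  have hulen : u.length = 2*k := by rw [hu, List.length_take]; omega
  have hvlen : v.length = 2*n - (2*k+2) := by rw [hv, List.length_drop]; omega
  have hcv : ∀ s, cnt l (2*k+2+s) = cnt l (2*k+2) + cnt v s := fun s => cnt_add l _ s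
  have humem : u ∈ W 2 (2*k) 0 := by
    rw [mem_W (by norm_num) (by norm_num)]
    refine ⟨hulen, ?_, ?_⟩
    · intro t ht
      rw [hcu t ht]
      have h1 := hlow t (by omega)
      have h2 := hup t (by omega)
      have h3 : 2*cnt l t ≠ t+3 := by
        intro hcon
        have := huniq t ⟨by omega, hcon⟩
        omega
      omega
    · rw [hcu (2*k) le_rfl]; omega
  have hvmem : v ∈ W 0 (2*n - (2*k+2)) 2 := by
    rw [mem_W (by norm_num) (by norm_num)]
    refine ⟨hvlen, ?_, ?_⟩
    · intro s hs
      have h0 := hcv s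
      have h1 := hlow (2*k+2+s) (by omega)
      have h2 := hup (2*k+2+s) (by omega)
      have h3 : 2*cnt l (2*k+2+s) ≠ (2*k+2+s)+3 := by
        intro hcon
        have := huniq (2*k+2+s) ⟨by omega, hcon⟩
        omega
      omega
    · have h0 := hcv (2*n - (2*k+2))
      rw [show 2*k+2+(2*n - (2*k+2)) = 2*n by omega] at h0
      omega
  refine ⟨k, hkn, mem_piece.mpr ⟨u, v, humem, hvmem, ?_⟩⟩
  have hsplit : l = l.take (2*k) ++ l.drop (2*k) := (List.take_append_drop _ _).symm
  have hd1 : l.drop (2*k) = l[2*k]'(by omega) :: l.drop (2*k+1) :=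
    List.drop_eq_getElem_cons (by omega)
  have hd2 : l.drop (2*k+1) = l[2*k+1]'(by omega) :: l.drop (2*k+2) :=
    List.drop_eq_getElem_cons (by omega)
  rw [hd2, hg2k1] at hd1
  rw [hg2k] at hd1
  rw [hd1] at hsplit
  exact hsplit

def T (n : ℕ) : Finset (List Bool) := (Finset.range n).biUnion (piece n)

lemma mem_T_iff {n : ℕ} {l : List Bool} : l ∈ T n ↔ Cond n l := by
  simp only [T, Finset.mem_biUnion, Finset.mem_range]
  constructor
  · rintro ⟨k, hk, hl⟩
    exact cond_of_piece hk hl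
  · intro hc
    obtain ⟨k, hk, h⟩ := exists_piece_of_cond hc
    exact ⟨k, hk, h⟩

lemma piece_card {n k : ℕ} :
    (piece n k).card = (W 2 (2*k) 0).card * (W 0 (2*n - (2*k+2)) 2).card := by
  rw [piece, Finset.card_image_of_injOn, Finset.card_product]
  rintro ⟨u, v⟩ h ⟨u', v'⟩ h' heq
  simp only [Finset.mem_coe, Finset.mem_product] at h h'
  have hul : u.length = 2*k := ((mem_W (by norm_num) (by norm_num)).mp h.1).1
  have hul' : u'.length = 2*k := ((mem_W (by norm_num) (by norm_num)).mp h'.1).1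
  simp only at heq
  obtain ⟨h1, h2⟩ := List.append_inj heq (by rw [hul, hul'])
  simp only [List.cons.injEq] at h2
  exact Prod.ext h1 h2.2.2

lemma piece_disjoint {n : ℕ} : ∀ k ∈ Finset.range n, ∀ k' ∈ Finset.range n, k ≠ k' →
    Disjoint (piece n k) (piece n k') := by
  intro k hk k' hk' hne
  simp only [Finset.mem_range] at hk hk'
  rw [Finset.disjoint_left]
  intro l hl hl'
  have h1 := (piece_facts hk hl).2.2.2.2
  have h2 := uniq_of_piece hk' hl' (2*k+1) (by omega) (by omega)
  omega

lemma T_card {n : ℕ} (hn : 5 ≤ n) : (T n).card = (n-2) * 2^(n-3) := by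
  obtain ⟨m, rfl⟩ : ∃ m, n = m + 5 := ⟨n - 5, by omega⟩
  rw [T, Finset.card_biUnion piece_disjoint]
  have hterm : ∀ i < m+3, (piece (m+5) (i+1)).card = 2^(m+2) := by
    intro i hi
    rw [piece_card]
    have e1 : 2*(i+1) = 2*i+2 := by ring
    have e2 : 2*(m+5) - (2*i+2+2) = 2*(m+2-i)+2 := by omega
    rw [e1, (A_card i).1, e2, (B_card (m+2-i)).1, ← pow_add]
    congr 1
    omega
  have h0 : (piece (m+5) 0).card = 0 := by
    rw [piece_card]
    simp [W_zero_card]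
  have hlast : (piece (m+5) (m+4)).card = 0 := by
    rw [piece_card]
    have e : 2*(m+5) - (2*(m+4)+2) = 0 := by omega
    rw [e, W_zero_card]
    norm_num
  rw [show m+5 = (m+4)+1 from rfl, Finset.sum_range_succ' _ (m+4), h0,
    show m+4 = (m+3)+1 from rfl, Finset.sum_range_succ]
  rw [show (m+3)+1 = m+4 from rfl, hlast]
  rw [Finset.sum_congr rfl (fun i hi => hterm i (Finset.mem_range.mp hi))]
  rw [Finset.sum_const, Finset.card_range]
  have e3 : m+5-2 = m+3 := by omega
  have e4 : m+5-3 = m+2 := by omega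
  rw [e3, e4]
  simp [mul_comm]

/-- list-level peak on diagonal r -/
def Pk (l : List Bool) (i r : ℕ) : Prop :=
  ∃ h : i + 1 < l.length,
    l[i]'(Nat.lt_of_succ_lt h) = true ∧ l[i+1]'h = false ∧ 2 * cnt l (i+1) = (i+1) + r

lemma noHigh {n : ℕ} {l : List Bool} (hlen : l.length = 2*n)
    (hend : 2*cnt l (2*n) = 2*n)
    (hlow : ∀ t ≤ 2*n, t ≤ 2*cnt l t)
    (hex : ∃ t, t ≤ 2*n ∧ t + 4 ≤ 2*cnt l t) :
    ∃ i r, 4 ≤ r ∧ Pk l i r := by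
  have hne : ((Finset.range (2*n+1)).image (fun t => 2*cnt l t - t)).Nonempty := by
    refine ⟨2*cnt l 0 - 0, Finset.mem_image_of_mem _ ?_⟩
    simp
  set M := ((Finset.range (2*n+1)).image (fun t => 2*cnt l t - t)).max' hne with hMdef
  have hMle : ∀ t ≤ 2*n, 2*cnt l t ≤ t + M := by
    intro t ht
    have h1 : 2*cnt l t - t ≤ M :=
      Finset.le_max' _ _ (Finset.mem_image_of_mem (fun t => 2*cnt l t - t)
        (Finset.mem_range.mpr (by omega)))
    have := hlow t ht
    omega
  have hMattained : ∃ t, t ≤ 2*n ∧ 2*cnt l t = t + M := by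
    have h1 := Finset.max'_mem _ hne
    rw [Finset.mem_image] at h1
    obtain ⟨t, ht, heq⟩ := h1
    rw [Finset.mem_range] at ht
    have := hlow t (by omega)
    exact ⟨t, by omega, by omega⟩
  have hM4 : 4 ≤ M := by
    obtain ⟨t, ht, h4⟩ := hex
    have := hMle t ht
    omega
  set t₀ := Nat.find hMattained with ht₀def
  obtain ⟨ht₀n, ht₀⟩ := Nat.find_spec hMattained
  rw [← ht₀def] at ht₀n ht₀
  have ht₀min : ∀ t < t₀, ¬(t ≤ 2*n ∧ 2*cnt l t = t + M) := fun t h => Nat.find_min hMattained h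
  have ht₀1 : 1 ≤ t₀ := by
    by_contra h
    have h0 : t₀ = 0 := by omega
    rw [h0, cnt_zero] at ht₀
    omega
  set i := t₀ - 1 with hidef
  have hti : t₀ = i + 1 := by omega
  rw [hti] at ht₀ ht₀n
  have hstep : ∀ t (ht : t < l.length),
      cnt l (t+1) = cnt l t + (if l[t] then 1 else 0) := cnt_succ l
  have h1 := hstep i (by omega)
  have hgi : l[i]'(by omega) = true := by
    by_contra hg
    simp only [Bool.not_eq_true] at hg
    rw [hg] at h1
    simp at h1
    have hb := hMle i (by omega)
    have hm := ht₀min i (by omega)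
    omega
  rw [hgi] at h1
  simp at h1
  have hlt : i + 1 < 2*n := by
    rcases Nat.lt_or_ge (i+1) (2*n) with h | h
    · exact h
    · exfalso
      have : i + 1 = 2*n := by omega
      rw [this] at ht₀
      omega
  have h2 := hstep (i+1) (by omega)
  simp only [show i+1+1 = i+2 from by ring] at h2
  have hgi1 : l[i+1]'(by omega) = false := by
    by_contra hg
    simp only [Bool.not_eq_false] at hg
    rw [hg] at h2
    simp at h2
    have hb := hMle (i+2) (by omega)
    omega
  exact ⟨i, M, hM4, by omega, hgi, hgi1, by omega⟩

lemma time_to_peak {n : ℕ} {l : List Bool} (hlen : l.length = 2*n)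
    (hlow : ∀ t ≤ 2*n, t ≤ 2*cnt l t)
    (hbnd : ∀ t ≤ 2*n, 2*cnt l t ≤ t+3)
    {t : ℕ} (ht : t ≤ 2*n) (heq : 2*cnt l t = t + 3) :
    ∃ i, i + 1 = t ∧ Pk l i 3 := by
  have ht1 : 1 ≤ t := by
    by_contra h
    have h0 : t = 0 := by omega
    rw [h0, cnt_zero] at heq
    omega
  set i := t - 1 with hidef
  have hti : t = i + 1 := by omega
  rw [hti] at heq ht
  have hstep : ∀ s (hs : s < l.length),
      cnt l (s+1) = cnt l s + (if l[s] then 1 else 0) := cnt_succ l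
  have h1 := hstep i (by omega)
  have hgi : l[i]'(by omega) = true := by
    by_contra hg
    simp only [Bool.not_eq_true] at hg
    rw [hg] at h1
    simp at h1
    have hb := hbnd i (by omega)
    omega
  rw [hgi] at h1
  simp at h1
  have hlt : i + 1 < 2*n := by
    rcases Nat.lt_or_ge (i+1) (2*n) with h | h
    · exact h
    · exfalso
      have h2n : i + 1 = 2*n := by omega
      rw [h2n] at heq
      have := hlow (2*n) le_rfl
      have hb := hbnd (2*n) le_rfl
      omega
  have h2 := hstep (i+1) (by omega)
  simp only [show i+1+1 = i+2 from by ring] at h2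
  have hgi1 : l[i+1]'(by omega) = false := by
    by_contra hg
    simp only [Bool.not_eq_false] at hg
    rw [hg] at h2
    simp at h2
    have hb := hbnd (i+2) (by omega)
    omega
  rw [hti]
  exact ⟨i, rfl, by omega, hgi, hgi1, heq⟩

lemma key {n : ℕ} {l : List Bool} (hlen : l.length = 2*n)
    (hend : 2*cnt l (2*n) = 2*n)
    (hlow : ∀ t ≤ 2*n, t ≤ 2*cnt l t) :
    ((∃! i : ℕ, Pk l i 3) ∧ ¬ ∃ i r, 4 ≤ r ∧ Pk l i r) ↔
    ((∀ t ≤ 2*n, 2*cnt l t ≤ t+3) ∧ ∃! t, (t ≤ 2*n ∧ 2*cnt l t = t+3)) := by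
  constructor
  · rintro ⟨⟨i₀, hi₀, hi₀u⟩, hno⟩
    have hbnd : ∀ t ≤ 2*n, 2*cnt l t ≤ t+3 := by
      by_contra hcon
      push_neg at hcon
      obtain ⟨t, ht, hgt⟩ := hcon
      exact hno (noHigh hlen hend hlow ⟨t, ht, by omega⟩)
    refine ⟨hbnd, ⟨i₀ + 1, ?_, ?_⟩⟩
    · obtain ⟨h, -, -, hc⟩ := hi₀
      exact ⟨by omega, hc⟩
    · rintro t ⟨ht, heq⟩
      obtain ⟨i, hit, hpk⟩ := time_to_peak hlen hlow hbnd ht heq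
      rw [← hit, hi₀u i hpk]
  · rintro ⟨hbnd, ⟨t₀, ⟨ht₀n, ht₀⟩, ht₀u⟩⟩
    obtain ⟨i₀, hit₀, hpk₀⟩ := time_to_peak hlen hlow hbnd ht₀n ht₀
    constructor
    · refine ⟨i₀, hpk₀, ?_⟩
      intro i hpk
      obtain ⟨h, -, -, hc⟩ := hpk
      have : i + 1 = t₀ := ht₀u (i+1) ⟨by omega, hc⟩
      omega
    · rintro ⟨i, r, hr, ⟨h, -, -, hc⟩⟩
      have := hbnd (i+1) (by omega)
      omega

def northCount' {m : ℕ} (p : Fin m → Bool) (k : ℕ) : ℕ :=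
  (Finset.univ.filter fun i : Fin m => (i : ℕ) < k ∧ p i = true).card

lemma northCount'_eq {m : ℕ} (p : Fin m → Bool) (k : ℕ) :
    northCount' p k = cnt (List.ofFn p) k := by
  induction k with
  | zero =>
    rw [cnt_zero]
    simp [northCount']
  | succ k ih =>
    rcases Nat.lt_or_ge k m with hk | hk
    · have hk' : k < (List.ofFn p).length := by simpa using hk
      rw [cnt_succ _ _ hk', ← ih, List.getElem_ofFn]
      unfold northCount'
      have hsplit : (Finset.univ.filter fun i : Fin m => (i : ℕ) < k + 1 ∧ p i = true)
          = (Finset.univ.filter fun i : Fin m => (i : ℕ) < k ∧ p i = true)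
            ∪ (Finset.univ.filter fun i : Fin m => (i : ℕ) = k ∧ p i = true) := by
        rw [← Finset.filter_or]
        apply Finset.filter_congr
        intro i _
        constructor
        · rintro ⟨h1, h2⟩
          rcases Nat.lt_or_ge (i : ℕ) k with h | h
          · exact Or.inl ⟨h, h2⟩
          · exact Or.inr ⟨by omega, h2⟩
        · rintro (⟨h1, h2⟩ | ⟨h1, h2⟩) <;> exact ⟨by omega, h2⟩
      rw [hsplit, Finset.card_union_of_disjoint]
      · congr 1
        by_cases hp : p ⟨k, hk⟩ = true
        · rw [hp]
          simp only [if_true]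
          rw [Finset.card_eq_one]
          refine ⟨⟨k, hk⟩, ?_⟩
          ext i
          simp only [Finset.mem_filter, Finset.mem_univ, true_and, Finset.mem_singleton]
          constructor
          · rintro ⟨h1, h2⟩
            exact Fin.ext h1
          · rintro rfl
            exact ⟨rfl, hp⟩
        · rw [Bool.not_eq_true] at hp
          rw [hp]
          simp only [Bool.false_eq_true, if_false]
          rw [Finset.card_eq_zero]
          ext i
          simp only [Finset.mem_filter, Finset.mem_univ, true_and, Finset.notMem_empty,
            iff_false, not_and]
          rintro h1
          have : i = ⟨k, hk⟩ := Fin.ext h1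
          rw [this, hp]
          simp
      · rw [Finset.disjoint_left]
        intro i hi hi'
        simp only [Finset.mem_filter] at hi hi'
        omega
    · have h1 : cnt (List.ofFn p) (k+1) = cnt (List.ofFn p) k := by
        rw [cnt_of_le _ (by simp; omega), cnt_of_le _ (by simp; omega)]
      rw [h1, ← ih]
      unfold northCount'
      congr 1
      apply Finset.filter_congr
      intro i _
      have := i.isLt
      constructor
      · rintro ⟨h2, h3⟩; exact ⟨by omega, h3⟩
      · rintro ⟨h2, h3⟩; exact ⟨by omega, h3⟩


lemma northCount_eq {m : ℕ} (p : Fin m → Bool) (k : ℕ) :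
    northCount p k = cnt (List.ofFn p) k := northCount'_eq p k

lemma peak_transfer {n : ℕ} (p : Fin (2 * n) → Bool) (i : Fin (2 * n)) (r : ℕ) :
    PeakOnDiag p i r ↔ Pk (List.ofFn p) (i : ℕ) r := by
  have hlen : (List.ofFn p).length = 2 * n := by simp
  constructor
  · rintro ⟨⟨j, hj, hpi, hpj⟩, hc⟩
    have hj2 : (i : ℕ) + 1 < 2 * n := hj ▸ j.isLt
    refine ⟨by omega, ?_, ?_, ?_⟩
    · rw [List.getElem_ofFn]
      simpa using hpi
    · rw [List.getElem_ofFn]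
      have : (⟨(i : ℕ) + 1, by omega⟩ : Fin (2 * n)) = j := Fin.ext (by simp [hj])
      rw [this]
      exact hpj
    · rw [← northCount_eq]
      exact hc
  · rintro ⟨h, hgi, hgj, hc⟩
    have hlt : (i : ℕ) + 1 < 2 * n := by omega
    refine ⟨⟨⟨(i : ℕ) + 1, hlt⟩, rfl, ?_, ?_⟩, ?_⟩
    · rw [List.getElem_ofFn] at hgi
      simpa using hgi
    · rw [List.getElem_ofFn] at hgj
      exact hgj
    · rw [northCount_eq]
      exact hc

lemma main_iff {n : ℕ} (p : Fin (2 * n) → Bool) :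
    (IsDyck p ∧ (∃! i : Fin (2 * n), PeakOnDiag p i 3) ∧
      ¬ ∃ (i : Fin (2 * n)) (r : ℕ), 4 ≤ r ∧ PeakOnDiag p i r) ↔ Cond n (List.ofFn p) := by
  set l := List.ofFn p with hldef
  have hlen : l.length = 2 * n := by simp [hldef]
  constructor
  · rintro ⟨⟨hd1, hd2⟩, hex, hno⟩
    rw [northCount_eq, ← hldef] at hd1
    have hend : 2 * cnt l (2*n) = 2*n := by omega
    have hlow : ∀ t ≤ 2*n, t ≤ 2 * cnt l t := by
      intro t ht
      have := hd2 t ht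
      rw [northCount_eq, ← hldef] at this
      exact this
    -- transfer exists-unique and no-high to list level
    have hexN : ∃! i : ℕ, Pk l i 3 := by
      obtain ⟨i₀, hi₀, hu⟩ := hex
      refine ⟨(i₀ : ℕ), (peak_transfer p i₀ 3).mp hi₀, ?_⟩
      intro j hj
      have hjlt : j < 2 * n := by
        obtain ⟨hh, -⟩ := hj
        omega
      have := hu ⟨j, hjlt⟩ ((peak_transfer p ⟨j, hjlt⟩ 3).mpr hj)
      exact congrArg Fin.val this
    have hnoN : ¬ ∃ i r, 4 ≤ r ∧ Pk l i r := by
      rintro ⟨i, r, hr, hpk⟩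
      have hilt : i < 2 * n := by
        obtain ⟨hh, -⟩ := hpk
        omega
      exact hno ⟨⟨i, hilt⟩, r, hr, (peak_transfer p ⟨i, hilt⟩ r).mpr hpk⟩
    obtain ⟨hbnd, hexu⟩ := (key hlen hend hlow).mp ⟨hexN, hnoN⟩
    exact ⟨hlen, hend, hlow, hbnd, hexu⟩
  · rintro ⟨-, hend, hlow, hbnd, hexu⟩
    obtain ⟨hexN, hnoN⟩ := (key hlen hend hlow).mpr ⟨hbnd, hexu⟩
    refine ⟨⟨?_, ?_⟩, ?_, ?_⟩
    · rw [northCount_eq, ← hldef]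
      omega
    · intro t ht
      rw [northCount_eq, ← hldef]
      exact hlow t ht
    · obtain ⟨i₀, hi₀, hu⟩ := hexN
      have hilt : i₀ < 2 * n := by
        obtain ⟨hh, -⟩ := hi₀
        omega
      refine ⟨⟨i₀, hilt⟩, (peak_transfer p ⟨i₀, hilt⟩ 3).mpr hi₀, ?_⟩
      intro j hj
      have := hu (j : ℕ) ((peak_transfer p j 3).mp hj)
      exact Fin.ext this
    · rintro ⟨i, r, hr, hpk⟩
      exact hnoN ⟨(i : ℕ), r, hr, (peak_transfer p i r).mp hpk⟩

theorem stmt15 (n : ℕ) (hn : 5 ≤ n) :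
    Nat.card {p : Fin (2 * n) → Bool // IsDyck p ∧
      (∃! i : Fin (2 * n), PeakOnDiag p i 3) ∧
      ¬ ∃ (i : Fin (2 * n)) (r : ℕ), 4 ≤ r ∧ PeakOnDiag p i r} =
    (n - 2) * 2 ^ (n - 3) := by
  have E : {p : Fin (2 * n) → Bool // IsDyck p ∧
      (∃! i : Fin (2 * n), PeakOnDiag p i 3) ∧
      ¬ ∃ (i : Fin (2 * n)) (r : ℕ), 4 ≤ r ∧ PeakOnDiag p i r} ≃ {l // l ∈ T n} := by
    refine ⟨fun x => ⟨List.ofFn x.1, mem_T_iff.mpr ((main_iff x.1).mp x.2)⟩,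
      fun x => ⟨fun i => x.1[(i : ℕ)]'(by
        rw [(mem_T_iff.mp x.2).1]; exact i.isLt), ?_⟩, ?_, ?_⟩
    · have hofn : List.ofFn (fun i : Fin (2*n) => x.1[(i : ℕ)]'(by
        rw [(mem_T_iff.mp x.2).1]; exact i.isLt)) = x.1 := by
        apply List.ext_getElem
        · simp [(mem_T_iff.mp x.2).1]
        · intro i h1 h2
          simp
      rw [main_iff, hofn]
      exact mem_T_iff.mp x.2
    · intro x
      apply Subtype.ext
      funext i
      simp
    · intro x
      apply Subtype.ext
      apply List.ext_getElem
      · simp [(mem_T_iff.mp x.2).1]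
      · intro i h1 h2
        simp
  rw [Nat.card_congr E, Nat.card_eq_finsetCard, T_card hn]
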